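/- Let $\lambda>0$. If $\psi\in L^1([0,\infty))$ satisfies $\int_0^\infty s^j\psi(s)ds=0$ for even $0\le j\le 2[\lambda]$ and $\int_1^\infty s^\beta|\psi(s)|ds<\infty$ for some $\beta>2\lambda$, then there exist $\rho>0$ and $C>0$ with $|B_{\lambda+1}\psi(u)|\le C\,\frac{u^{\lambda}}{(u+1)^{\lambda+\rho}}$ for all $u>0$. -/

import Mathlib

open MeasureTheory Real

/-- The modified fractional integral `B_δ ψ`. -/
noncomputable def fracB (δ : ℝ) (ψ : ℝ → ℝ) (u : ℝ) : ℝ :=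
  (2 / Real.Gamma δ) * ∫ v in (0:ℝ)..(Real.sqrt u), ψ v * (u - v^2) ^ (δ - 1)

open Set

noncomputable def cc (lam : ℝ) (k : ℕ) : ℝ :=
  (∏ i ∈ Finset.range k, ((i : ℝ) - lam)) / (Nat.factorial k)

lemma taylor_id (lam : ℝ) (n : ℕ) (x : ℝ) (hx0 : 0 ≤ x) (hx : x ≤ 1/2) :
    (1 - x) ^ lam = ∑ k ∈ Finset.range (n+1), cc lam k * x ^ k
      + ((∏ i ∈ Finset.range (n+1), ((i : ℝ) - lam)) / (Nat.factorial n)) *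
        ∫ t in (0:ℝ)..x, (x - t) ^ n * (1 - t) ^ (lam - n - 1) := by
  induction n with
  | zero =>
      have h1 : ∀ t ∈ uIcc (0:ℝ) x, HasDerivAt (fun y => (1 - y) ^ lam)
          (-lam * (1 - t) ^ (lam - 1)) t := by
        intro t ht
        rw [uIcc_of_le hx0] at ht
        have h1t : (0:ℝ) < 1 - t := by nlinarith [ht.1, ht.2]
        have := ((Real.hasDerivAt_rpow_const (p := lam) (Or.inl h1t.ne'))).comp t
          ((hasDerivAt_id t).const_sub 1)
        refine this.congr_deriv ?_
        ring
      have h2 : IntervalIntegrable (fun t => -lam * (1 - t) ^ (lam - 1)) volume 0 x := by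
        apply ContinuousOn.intervalIntegrable
        apply ContinuousOn.mul continuousOn_const
        apply ContinuousOn.rpow_const (by fun_prop)
        intro t ht
        rw [uIcc_of_le hx0] at ht
        left
        nlinarith [ht.1, ht.2]
      have := intervalIntegral.integral_eq_sub_of_hasDerivAt h1 h2
      rw [intervalIntegral.integral_const_mul] at this
      simp only [zero_add, Finset.range_one, Finset.sum_singleton, cc, Finset.range_zero,
        Finset.prod_empty, Nat.factorial_zero, Nat.cast_zero, Nat.cast_one, pow_zero, one_mul,
        div_one, Finset.prod_range_one, Nat.factorial_one, Finset.prod_singleton, CharP.cast_eq_zero, zero_sub]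
      rw [show lam - 0 - 1 = lam - 1 by ring]
      rw [show (1:ℝ) - 0 = 1 by ring, Real.one_rpow] at this
      linear_combination -this
  | succ n ih =>
      have hne1 : ((n:ℝ)+1) ≠ 0 := by positivity
      have hne2 : ((Nat.factorial n : ℝ)) ≠ 0 := Nat.cast_ne_zero.mpr n.factorial_ne_zero
      have hder_u : ∀ t ∈ uIcc (0:ℝ) x, HasDerivAt (fun y => (1 - y) ^ (lam - n - 1))
          (-(lam - n - 1) * (1 - t) ^ (lam - n - 1 - 1)) t := by
        intro t ht
        rw [uIcc_of_le hx0] at ht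
        have h1t : (0:ℝ) < 1 - t := by nlinarith [ht.1, ht.2]
        have := ((Real.hasDerivAt_rpow_const (p := lam - n - 1) (Or.inl h1t.ne'))).comp t
          ((hasDerivAt_id t).const_sub 1)
        refine this.congr_deriv ?_
        ring
      have hder_v : ∀ t ∈ uIcc (0:ℝ) x, HasDerivAt (fun y => -((x - y) ^ (n+1)) / (n+1))
          ((x - t) ^ n) t := by
        intro t _
        have h0 : HasDerivAt (fun y : ℝ => x - y) (-1) t := (hasDerivAt_id t).const_sub x
        have h1 := (h0.pow (n+1)).neg.div_const ((n:ℝ)+1)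
        refine h1.congr_deriv ?_
        push_cast
        field_simp
      have hi_u' : IntervalIntegrable (fun t => -(lam - n - 1) * (1 - t) ^ (lam - n - 1 - 1))
          volume 0 x := by
        apply ContinuousOn.intervalIntegrable
        apply ContinuousOn.mul continuousOn_const
        apply ContinuousOn.rpow_const (by fun_prop)
        intro t ht
        rw [uIcc_of_le hx0] at ht
        left
        nlinarith [ht.1, ht.2]
      have hi_v' : IntervalIntegrable (fun t : ℝ => (x - t) ^ n) volume 0 x :=
        ((continuous_const.sub continuous_id).pow n).intervalIntegrable 0 x
      have ibp2 : ∫ t in (0:ℝ)..x, (x - t)^n * (1-t)^(lam - n - 1)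
          = x^(n+1)/(n+1) - ((lam - n - 1)/(n+1)) * ∫ t in (0:ℝ)..x,
              (x - t)^(n+1) * (1-t)^(lam - n - 1 - 1) := by
        have hI := intervalIntegral.integral_mul_deriv_eq_deriv_mul hder_u hder_v hi_u' hi_v'
        have e1 : ∫ t in (0:ℝ)..x, (-(lam - n - 1) * (1 - t) ^ (lam - n - 1 - 1)) *
              (-((x - t) ^ (n+1)) / (n+1))
            = ((lam - n - 1)/(n+1)) * ∫ t in (0:ℝ)..x, (x - t)^(n+1) * (1-t)^(lam - n - 1 - 1) := by
          rw [← intervalIntegral.integral_const_mul]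
          apply intervalIntegral.integral_congr
          intro t _
          field_simp
        have e0 : ∫ t in (0:ℝ)..x, (x - t)^n * (1-t)^(lam - n - 1)
            = ∫ t in (0:ℝ)..x, (1-t)^(lam - n - 1) * (x - t)^n :=
          intervalIntegral.integral_congr (fun t _ => mul_comm _ _)
        rw [e0, hI, e1]
        rw [sub_self, show (1:ℝ) - 0 = 1 by ring, Real.one_rpow, show x - 0 = x by ring]
        rw [zero_pow (Nat.succ_ne_zero n)]
        ring
      have hfac : ((Nat.factorial (n+1) : ℝ)) = ((n:ℝ)+1) * (Nat.factorial n : ℝ) := by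
        rw [Nat.factorial_succ]; push_cast; ring
      have hprod : ∏ i ∈ Finset.range (n+2), ((i:ℝ) - lam)
          = (∏ i ∈ Finset.range (n+1), ((i:ℝ) - lam)) * (((n:ℝ)+1) - lam) := by
        rw [Finset.prod_range_succ]; push_cast; ring
      rw [Finset.sum_range_succ]
      have ecast : lam - ((n:ℝ)+1) - 1 = lam - (n:ℝ) - 1 - 1 := by ring
      push_cast
      rw [ecast, show n + 1 + 1 = n + 2 from rfl, hprod, hfac]
      rw [show cc lam (n+1) = (∏ i ∈ Finset.range (n+1), ((i:ℝ) - lam)) / (((n:ℝ)+1) * (Nat.factorial n : ℝ)) from by rw [cc, hfac]]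
      push_cast at ih
      rw [← div_div, ← div_div]
      linear_combination ih + ((∏ i ∈ Finset.range (n+1), ((i:ℝ) - lam)) / (Nat.factorial n : ℝ)) * ibp2

lemma taylor_bound (lam s : ℝ) (hlam : 0 < lam) (hs0 : 0 < s)
    (hsm : s ≤ (⌊lam⌋.toNat : ℝ) + 1) :
    ∃ C : ℝ, 0 < C ∧ ∀ x : ℝ, 0 ≤ x → x ≤ 1 →
      |(1 - x) ^ lam - ∑ k ∈ Finset.range (⌊lam⌋.toNat + 1), cc lam k * x ^ k| ≤ C * x ^ s := by
  set m := ⌊lam⌋.toNat with hm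
  have hmlam : lam ≤ (m : ℝ) + 1 := by
    have h1 : lam < ⌊lam⌋ + 1 := Int.lt_floor_add_one lam
    have h2 : (⌊lam⌋ : ℝ) = (m : ℝ) := by
      rw [hm]; exact_mod_cast (Int.toNat_of_nonneg (Int.floor_nonneg.mpr hlam.le)).symm
    linarith [h2 ▸ h1]
  set D : ℝ := ∑ k ∈ Finset.range (m+1), |cc lam k| with hD
  set Km : ℝ := |∏ i ∈ Finset.range (m+1), ((i : ℝ) - lam)| / (Nat.factorial m) with hKm
  have hD0 : 0 ≤ D := Finset.sum_nonneg fun k _ => abs_nonneg _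
  have hKm0 : 0 ≤ Km := div_nonneg (abs_nonneg _) (Nat.cast_nonneg _)
  refine ⟨2 ^ s * (Km * 2 ^ ((m:ℝ)+1) + 1 + D) + 1, by positivity, ?_⟩
  intro x hx0 hx1
  have hxs : (0:ℝ) ≤ x ^ s := Real.rpow_nonneg hx0 s
  rcases le_or_gt x (1/2) with hc | hc
  · -- Taylor remainder regime
    have hid := taylor_id lam m x hx0 hc
    have hrem : |(1 - x) ^ lam - ∑ k ∈ Finset.range (m+1), cc lam k * x ^ k|
        = |((∏ i ∈ Finset.range (m+1), ((i : ℝ) - lam)) / (Nat.factorial m)) *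
            ∫ t in (0:ℝ)..x, (x - t) ^ m * (1 - t) ^ (lam - m - 1)| := by
      rw [hid, add_sub_cancel_left]
    rw [hrem, abs_mul, abs_div, Nat.abs_cast, ← hKm]
    have hbint : ‖∫ t in (0:ℝ)..x, (x - t) ^ m * (1 - t) ^ (lam - m - 1)‖
        ≤ (x ^ m * 2 ^ ((m:ℝ)+1)) * |x - 0| := by
      apply intervalIntegral.norm_integral_le_of_norm_le_const
      intro t ht
      rw [Set.uIoc_of_le hx0] at ht
      have ht1 : 0 < t := ht.1
      have ht2 : t ≤ x := ht.2
      have h1t : (1:ℝ)/2 ≤ 1 - t := by linarith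
      have h1t' : (0:ℝ) < 1 - t := by linarith
      rw [Real.norm_eq_abs, abs_mul, abs_pow]
      have hb1 : |x - t| ^ m ≤ x ^ m := by
        apply pow_le_pow_left₀ (abs_nonneg _)
        rw [abs_of_nonneg (by linarith)]; linarith
      have hb2 : |(1 - t) ^ (lam - (m:ℝ) - 1)| ≤ 2 ^ ((m:ℝ)+1) := by
        rw [abs_of_nonneg (Real.rpow_nonneg h1t'.le _)]
        calc (1 - t) ^ (lam - (m:ℝ) - 1) ≤ (1/2 : ℝ) ^ (lam - (m:ℝ) - 1) :=
              Real.rpow_le_rpow_of_nonpos (by norm_num) h1t (by linarith)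
          _ = 2 ^ ((m:ℝ) + 1 - lam) := by
              rw [one_div, ← Real.rpow_neg_one, ← Real.rpow_mul (by norm_num : (0:ℝ) ≤ 2)]
              congr 1
              ring
          _ ≤ 2 ^ ((m:ℝ) + 1) := Real.rpow_le_rpow_of_exponent_le (by norm_num) (by linarith)
      exact mul_le_mul hb1 hb2 (abs_nonneg _) (pow_nonneg hx0 _)
    have hxm : x ^ m * |x - 0| ≤ x ^ s := by
      rw [sub_zero, abs_of_nonneg hx0]
      rcases eq_or_lt_of_le hx0 with h0 | h0
      · rw [← h0]
        rw [Real.zero_rpow hs0.ne']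
        rcases Nat.eq_zero_or_pos m with hm0 | hm0
        · simp [hm0]
        · rw [zero_pow hm0.ne']; simp
      · have : x ^ m * x = x ^ ((m:ℝ)+1) := by
          rw [← Real.rpow_natCast x m, ← Real.rpow_add_one h0.ne']
        rw [this]
        exact Real.rpow_le_rpow_of_exponent_ge h0 hx1 hsm
    calc Km * |∫ t in (0:ℝ)..x, (x - t) ^ m * (1 - t) ^ (lam - m - 1)|
        ≤ Km * ((x ^ m * 2 ^ ((m:ℝ)+1)) * |x - 0|) := by
          rw [← Real.norm_eq_abs (∫ t in (0:ℝ)..x, (x - t) ^ m * (1 - t) ^ (lam - m - 1))]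
          apply mul_le_mul_of_nonneg_left hbint hKm0
      _ = Km * 2 ^ ((m:ℝ)+1) * (x ^ m * |x - 0|) := by ring
      _ ≤ Km * 2 ^ ((m:ℝ)+1) * x ^ s := by
          apply mul_le_mul_of_nonneg_left hxm (by positivity)
      _ ≤ (2 ^ s * (Km * 2 ^ ((m:ℝ)+1) + 1 + D) + 1) * x ^ s := by
          apply mul_le_mul_of_nonneg_right _ hxs
          have h2s : (1:ℝ) ≤ 2 ^ s := Real.one_le_rpow one_le_two hs0.le
          nlinarith [mul_le_mul_of_nonneg_right h2s
            (by positivity : (0:ℝ) ≤ Km * 2 ^ ((m:ℝ)+1) + 1 + D),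
            (by positivity : (0:ℝ) ≤ Km * 2 ^ ((m:ℝ)+1))]
  · -- crude regime x ∈ (1/2, 1]
    have h1 : |(1 - x) ^ lam| ≤ 1 := by
      rw [abs_of_nonneg (Real.rpow_nonneg (by linarith) _)]
      exact Real.rpow_le_one (by linarith) (by linarith) hlam.le
    have h2 : |∑ k ∈ Finset.range (m+1), cc lam k * x ^ k| ≤ D := by
      refine (Finset.abs_sum_le_sum_abs _ _).trans ?_
      apply Finset.sum_le_sum
      intro k _
      rw [abs_mul, abs_pow, abs_of_nonneg hx0]
      calc |cc lam k| * x ^ k ≤ |cc lam k| * 1 := by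
            apply mul_le_mul_of_nonneg_left (pow_le_one₀ hx0 hx1) (abs_nonneg _)
        _ = |cc lam k| := mul_one _
    have h3 : (2:ℝ)^(-s) ≤ x ^ s := by
      calc (2:ℝ)^(-s) = (1/2 : ℝ) ^ s := by
            rw [one_div, ← Real.rpow_neg_one, ← Real.rpow_mul (by norm_num)]
            ring_nf
        _ ≤ x ^ s := Real.rpow_le_rpow (by norm_num) hc.le hs0.le
    have h4 : (2:ℝ)^(-s) * 2 ^ s = 1 := by
      rw [← Real.rpow_add (by norm_num)]; norm_num
    calc |(1 - x) ^ lam - ∑ k ∈ Finset.range (m+1), cc lam k * x ^ k|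
        ≤ 1 + D := (abs_sub _ _).trans (by linarith)
      _ = (2:ℝ)^(-s) * (2 ^ s * (1 + D)) := by rw [← mul_assoc, h4, one_mul]
      _ ≤ x ^ s * (2 ^ s * (1 + D)) := by
          apply mul_le_mul_of_nonneg_right h3 (by positivity)
      _ ≤ (2 ^ s * (Km * 2 ^ ((m:ℝ)+1) + 1 + D) + 1) * x ^ s := by
          rw [mul_comm]
          apply mul_le_mul_of_nonneg_right _ hxs
          nlinarith [mul_nonneg (Real.rpow_nonneg (by norm_num : (0:ℝ) ≤ 2) s)
            (by positivity : (0:ℝ) ≤ Km * 2 ^ ((m:ℝ)+1))]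

lemma two_var (lam s : ℝ) (hlam : 0 < lam) (hs0 : 0 < s)
    (hsm : s ≤ (⌊lam⌋.toNat : ℝ) + 1) :
    ∃ C : ℝ, 0 < C ∧ ∀ u : ℝ, 0 < u → ∀ v : ℝ, 0 ≤ v → v^2 ≤ u →
      |(u - v^2) ^ lam - ∑ k ∈ Finset.range (⌊lam⌋.toNat + 1),
          cc lam k * u ^ (lam - (k:ℝ)) * v ^ (2*k)|
        ≤ C * u ^ (lam - s) * v ^ (2*s) := by
  obtain ⟨C, hC, hCb⟩ := taylor_bound lam s hlam hs0 hsm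
  refine ⟨C, hC, ?_⟩
  intro u hu v hv hv2
  set x := v^2/u with hx
  have hx0 : 0 ≤ x := by positivity
  have hx1 : x ≤ 1 := div_le_one_of_le₀ hv2 hu.le
  have key := hCb x hx0 hx1
  have e1 : (u - v^2)^lam = u^lam * (1 - x)^lam := by
    rw [← Real.mul_rpow hu.le (by linarith : (0:ℝ) ≤ 1 - x)]
    congr 1
    rw [hx]
    field_simp
  have e2 : ∀ k : ℕ, u ^ (lam - (k:ℝ)) * v ^ (2*k) = u^lam * x^k := by
    intro k
    rw [Real.rpow_sub hu, Real.rpow_natCast, hx, div_pow, pow_mul]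
    field_simp
  have e3 : C * u ^ (lam - s) * v ^ (2*s) = u^lam * (C * x^s) := by
    rw [hx, Real.div_rpow (by positivity) hu.le, Real.rpow_sub hu]
    rw [← Real.rpow_natCast v 2, ← Real.rpow_mul hv]
    norm_num
    ring
  have e4 : ∑ k ∈ Finset.range (⌊lam⌋.toNat+1), cc lam k * u ^ (lam - (k:ℝ)) * v^(2*k)
      = u^lam * ∑ k ∈ Finset.range (⌊lam⌋.toNat+1), cc lam k * x^k := by
    rw [Finset.mul_sum]
    apply Finset.sum_congr rfl
    intro k _
    rw [mul_assoc, e2 k]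
    ring
  rw [e1, e4, ← mul_sub, abs_mul, abs_of_nonneg (Real.rpow_nonneg hu.le _), e3]
  exact mul_le_mul_of_nonneg_left key (Real.rpow_nonneg hu.le _)

set_option maxHeartbeats 1000000 in
theorem stmt_16 (lam : ℝ) (hlam : 0 < lam) (ψ : ℝ → ℝ)
    (hψ : IntegrableOn ψ (Set.Ici 0))
    (β : ℝ) (hβ : 2 * lam < β)
    (hint1 : IntegrableOn (fun s => s ^ β * |ψ s|) (Set.Ici 1))
    (hmom : ∀ j : ℕ, Even j → (j : ℝ) ≤ 2 * ⌊lam⌋ →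
      ∫ s in Set.Ici (0:ℝ), s ^ (j : ℝ) * ψ s = 0) :
    ∃ ρ C : ℝ, 0 < ρ ∧ 0 < C ∧ ∀ u : ℝ, 0 < u →
      |fracB (lam + 1) ψ u| ≤ C * u ^ lam / (u + 1) ^ (lam + ρ) := by
  have hβ0 : 0 < β := by linarith
  have h0m : (0:ℤ) ≤ ⌊lam⌋ := Int.floor_nonneg.mpr hlam.le
  set m : ℕ := ⌊lam⌋.toNat with hmdef
  have hfloor : ((⌊lam⌋ : ℤ) : ℝ) = (m:ℝ) := by
    rw [hmdef]; exact_mod_cast (Int.toNat_of_nonneg h0m).symm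
  have hmle : (m:ℝ) ≤ lam := by rw [← hfloor]; exact Int.floor_le lam
  have hlt : lam < (m:ℝ) + 1 := by rw [← hfloor]; exact Int.lt_floor_add_one lam
  set s : ℝ := (lam + min ((m:ℝ)+1) (β/2))/2 with hsdef
  have hmin : lam < min ((m:ℝ)+1) (β/2) := lt_min hlt (by linarith)
  have hlams : lam < s := by rw [hsdef]; linarith
  have hs0 : 0 < s := lt_trans hlam hlams
  have hsm1 : s ≤ (m:ℝ)+1 := by
    have := min_le_left ((m:ℝ)+1) (β/2); rw [hsdef]; linarith
  have hsβ : 2*s ≤ β := by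
    have := min_le_right ((m:ℝ)+1) (β/2); rw [hsdef]; linarith
  obtain ⟨C₀, hC₀, hC₀b⟩ := two_var lam s hlam hs0 hsm1
  have hGamma : 0 < Real.Gamma (lam + 1) := Real.Gamma_pos_of_pos (by linarith)
  have hΓ2 : 0 ≤ 2 / Real.Gamma (lam + 1) := div_nonneg (by norm_num) hGamma.le
  -- moments over Ioi 0 with natural powers
  have hmomk : ∀ k : ℕ, k ≤ m → ∫ v in Set.Ioi (0:ℝ), v ^ (2*k : ℕ) * ψ v = 0 := by
    intro k hk
    have hle : ((2*k : ℕ) : ℝ) ≤ 2 * (⌊lam⌋ : ℝ) := by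
      rw [hfloor]
      have : (k:ℝ) ≤ (m:ℝ) := Nat.cast_le.mpr hk
      push_cast
      linarith
    have h1 := hmom (2*k) (even_two_mul k) hle
    rw [MeasureTheory.integral_Ici_eq_integral_Ioi] at h1
    have e : (fun v : ℝ => v ^ (((2*k:ℕ)):ℝ) * ψ v) = fun v => v ^ (2*k:ℕ) * ψ v :=
      funext fun v => by rw [Real.rpow_natCast]
    rwa [e] at h1
  -- measurability helpers
  have hmψ : AEStronglyMeasurable ψ (volume.restrict (Set.Ioi 0)) :=
    (hψ.mono_set Set.Ioi_subset_Ici_self).aestronglyMeasurable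
  -- master integrability lemma
  have hInt : ∀ γ : ℝ, 0 ≤ γ → γ ≤ β → ∀ φ : ℝ → ℝ, IntegrableOn φ (Set.Ici 0) →
      IntegrableOn (fun v => v ^ β * |φ v|) (Set.Ici 1) →
      IntegrableOn (fun v => v ^ γ * φ v) (Set.Ioi 0) := by
    intro γ hγ0 hγβ φ hφ hφβ
    have hcg : Continuous fun v : ℝ => v ^ γ :=
      continuous_id.rpow_const (fun x => Or.inr hγ0)
    have hsub1 : Set.Ioc (0:ℝ) 1 ⊆ Set.Ici 0 := fun x hx => hx.1.le
    have hsub2 : Set.Ioi (1:ℝ) ⊆ Set.Ici 0 := fun x hx => by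
      simp only [Set.mem_Ioi] at hx; exact le_of_lt (lt_trans one_pos hx)
    rw [show Set.Ioi (0:ℝ) = Set.Ioc 0 1 ∪ Set.Ioi 1 from
      (Set.Ioc_union_Ioi_eq_Ioi zero_le_one).symm]
    apply MeasureTheory.IntegrableOn.union
    · apply Integrable.mono (hφ.mono_set hsub1)
        (hcg.aestronglyMeasurable.mul (hφ.mono_set hsub1).aestronglyMeasurable)
      filter_upwards [MeasureTheory.ae_restrict_mem measurableSet_Ioc] with v hv
      simp only [Pi.mul_apply, Real.norm_eq_abs, abs_mul]
      have h1 : |v ^ γ| ≤ 1 := by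
        rw [abs_of_nonneg (Real.rpow_nonneg hv.1.le _)]
        exact Real.rpow_le_one hv.1.le hv.2 hγ0
      calc |v ^ γ| * |φ v| ≤ 1 * |φ v| := mul_le_mul_of_nonneg_right h1 (abs_nonneg _)
        _ = |φ v| := one_mul _
    · apply Integrable.mono (hφβ.mono_set Set.Ioi_subset_Ici_self)
        (hcg.aestronglyMeasurable.mul (hφ.mono_set hsub2).aestronglyMeasurable)
      filter_upwards [MeasureTheory.ae_restrict_mem measurableSet_Ioi] with v hv
      simp only [Set.mem_Ioi] at hv
      have hv0 : (0:ℝ) < v := lt_trans one_pos hv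
      simp only [Pi.mul_apply, Real.norm_eq_abs, abs_mul, abs_abs]
      rw [abs_of_nonneg (Real.rpow_nonneg hv0.le γ), abs_of_nonneg (Real.rpow_nonneg hv0.le β)]
      exact mul_le_mul_of_nonneg_right (Real.rpow_le_rpow_of_exponent_le hv.le hγβ)
        (abs_nonneg _)
  have habsβ : IntegrableOn (fun v => v ^ β * |(fun w => |ψ w|) v|) (Set.Ici 1) := by
    simpa [abs_abs] using hint1
  have hIabs : ∀ γ : ℝ, 0 ≤ γ → γ ≤ β →
      IntegrableOn (fun v => v ^ γ * |ψ v|) (Set.Ioi 0) := by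
    intro γ h1 h2
    simpa using hInt γ h1 h2 (fun w => |ψ w|) hψ.abs habsβ
  have hIψγ : ∀ γ : ℝ, 0 ≤ γ → γ ≤ β →
      IntegrableOn (fun v => v ^ γ * ψ v) (Set.Ioi 0) := fun γ h1 h2 =>
    hInt γ h1 h2 ψ hψ hint1
  have h2kβ : ∀ k : ℕ, k ≤ m → ((2*k : ℕ) : ℝ) ≤ β := by
    intro k hk
    have : (k:ℝ) ≤ (m:ℝ) := Nat.cast_le.mpr hk
    push_cast
    linarith
  have hIk : ∀ k : ℕ, k ≤ m → IntegrableOn (fun v => v ^ (2*k : ℕ) * ψ v) (Set.Ioi 0) := by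
    intro k hk
    have h := hIψγ ((2*k : ℕ):ℝ) (by positivity) (h2kβ k hk)
    have e : (fun v : ℝ => v ^ (((2*k : ℕ)):ℝ) * ψ v) = fun v => v ^ (2*k : ℕ) * ψ v :=
      funext fun v => by rw [Real.rpow_natCast]
    rwa [e] at h
  -- constants
  set M0 : ℝ := ∫ v in Set.Ioi (0:ℝ), |ψ v| with hM0def
  have hIM0 : IntegrableOn (fun v => |ψ v|) (Set.Ioi 0) :=
    (hψ.mono_set Set.Ioi_subset_Ici_self).abs
  have hM0 : 0 ≤ M0 := setIntegral_nonneg measurableSet_Ioi (fun v _ => abs_nonneg _)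
  set Ms : ℝ := ∫ v in Set.Ioi (0:ℝ), v ^ (2*s) * |ψ v| with hMsdef
  have hIMs : IntegrableOn (fun v => v ^ (2*s) * |ψ v|) (Set.Ioi 0) :=
    hIabs (2*s) (by positivity) hsβ
  have hMs : 0 ≤ Ms := setIntegral_nonneg measurableSet_Ioi
    (fun v hv => mul_nonneg (Real.rpow_nonneg (le_of_lt hv) _) (abs_nonneg _))
  set Mβ : ℝ := ∫ v in Set.Ioi (1:ℝ), v ^ β * |ψ v| with hMβdef
  have hIMβ : IntegrableOn (fun v => v ^ β * |ψ v|) (Set.Ioi 0) :=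
    hIabs β hβ0.le le_rfl
  have hMβ : 0 ≤ Mβ := setIntegral_nonneg measurableSet_Ioi
    (fun v hv => mul_nonneg (Real.rpow_nonneg (le_of_lt (lt_trans one_pos hv)) _) (abs_nonneg _))
  set D : ℝ := ∑ k ∈ Finset.range (m+1), |cc lam k| with hDdef
  have hD0 : 0 ≤ D := Finset.sum_nonneg fun k _ => abs_nonneg _
  -- integrability of ψ * (u - v^2)^lam
  have hIψh : ∀ u : ℝ, 0 < u →
      IntegrableOn (fun v => ψ v * (u - v^2) ^ lam) (Set.Ioc 0 (Real.sqrt u)) := by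
    intro u hu
    have hsub : Set.Ioc (0:ℝ) (Real.sqrt u) ⊆ Set.Ioi 0 := Set.Ioc_subset_Ioi_self
    have hcont : Continuous fun v : ℝ => (u - v^2) ^ lam :=
      Continuous.rpow_const (by fun_prop) (fun x => Or.inr hlam.le)
    apply Integrable.mono ((hIM0.mono_set hsub).mul_const (u ^ lam))
      ((hmψ.mono_measure (Measure.restrict_mono hsub le_rfl)).mul hcont.aestronglyMeasurable)
    filter_upwards [MeasureTheory.ae_restrict_mem measurableSet_Ioc] with v hv
    have hv2 : v^2 ≤ u := by
      have h := pow_le_pow_left₀ hv.1.le hv.2 2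
      rwa [Real.sq_sqrt hu.le] at h
    simp only [Pi.mul_apply, Real.norm_eq_abs, abs_mul, abs_abs]
    rw [abs_of_nonneg (Real.rpow_nonneg (by linarith) lam),
      abs_of_nonneg (Real.rpow_nonneg hu.le lam)]
    exact mul_le_mul_of_nonneg_left
      (Real.rpow_le_rpow (by linarith) (by nlinarith [sq_nonneg v]) hlam.le) (abs_nonneg _)
  -- small-u bound (valid for all u > 0)
  have hsmall : ∀ u : ℝ, 0 < u →
      |∫ v in (0:ℝ)..(Real.sqrt u), ψ v * (u - v^2) ^ lam| ≤ M0 * u ^ lam := by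
    intro u hu
    have hT0 : (0:ℝ) ≤ Real.sqrt u := Real.sqrt_nonneg u
    have hsub : Set.Ioc (0:ℝ) (Real.sqrt u) ⊆ Set.Ioi 0 := Set.Ioc_subset_Ioi_self
    rw [intervalIntegral.integral_of_le hT0]
    have h1 : |∫ v in Set.Ioc (0:ℝ) (Real.sqrt u), ψ v * (u - v^2) ^ lam|
        ≤ ∫ v in Set.Ioc (0:ℝ) (Real.sqrt u), |ψ v * (u - v^2) ^ lam| := by
      have := MeasureTheory.norm_integral_le_integral_norm
        (μ := volume.restrict (Set.Ioc (0:ℝ) (Real.sqrt u)))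
        (f := fun v => ψ v * (u - v^2) ^ lam)
      simpa only [Real.norm_eq_abs] using this
    refine h1.trans ?_
    have h2 : ∫ v in Set.Ioc (0:ℝ) (Real.sqrt u), |ψ v * (u - v^2) ^ lam|
        ≤ ∫ v in Set.Ioc (0:ℝ) (Real.sqrt u), |ψ v| * u ^ lam := by
      apply setIntegral_mono_on (hIψh u hu).abs ((hIM0.mono_set hsub).mul_const _)
        measurableSet_Ioc
      intro v hv
      have hv2 : v^2 ≤ u := by
        have h := pow_le_pow_left₀ hv.1.le hv.2 2
        rwa [Real.sq_sqrt hu.le] at h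
      rw [abs_mul, abs_of_nonneg (Real.rpow_nonneg (by linarith) lam)]
      exact mul_le_mul_of_nonneg_left
        (Real.rpow_le_rpow (by linarith) (by nlinarith [sq_nonneg v]) hlam.le) (abs_nonneg _)
    refine h2.trans ?_
    rw [MeasureTheory.integral_mul_const]
    apply mul_le_mul_of_nonneg_right _ (Real.rpow_nonneg hu.le lam)
    apply MeasureTheory.setIntegral_mono_set hIM0
    · filter_upwards with v using abs_nonneg _
    · exact hsub.eventuallyLE
  -- large-u bound
  have hlarge : ∀ u : ℝ, 1 ≤ u →
      |∫ v in (0:ℝ)..(Real.sqrt u), ψ v * (u - v^2) ^ lam|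
        ≤ (C₀ * Ms + D * Mβ) * u ^ (lam - s) := by
    intro u hu1
    have hu0 : (0:ℝ) < u := lt_of_lt_of_le one_pos hu1
    set T := Real.sqrt u with hTdef
    have hT1 : 1 ≤ T := Real.one_le_sqrt.mpr hu1
    have hT0 : (0:ℝ) < T := lt_of_lt_of_le one_pos hT1
    have hTsq : T^2 = u := Real.sq_sqrt hu0.le
    have hsub0 : Set.Ioc (0:ℝ) T ⊆ Set.Ioi 0 := Set.Ioc_subset_Ioi_self
    have hsubT : Set.Ioi T ⊆ Set.Ioi (0:ℝ) := Set.Ioi_subset_Ioi hT0.le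
    have hsubT1 : Set.Ioi T ⊆ Set.Ioi (1:ℝ) := Set.Ioi_subset_Ioi hT1
    have hIh := hIψh u hu0
    -- the polynomial part
    have hgeq : (fun v : ℝ => ψ v * (∑ k ∈ Finset.range (m+1),
          cc lam k * u ^ (lam - (k:ℝ)) * v ^ (2*k)))
        = fun v => ∑ k ∈ Finset.range (m+1),
            (cc lam k * u ^ (lam - (k:ℝ))) * (v ^ (2*k) * ψ v) := by
      funext v
      rw [Finset.mul_sum]
      apply Finset.sum_congr rfl
      intros
      ring
    have hIg : IntegrableOn (fun v => ψ v * ∑ k ∈ Finset.range (m+1),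
        cc lam k * u ^ (lam - (k:ℝ)) * v ^ (2*k)) (Set.Ioi 0) := by
      rw [hgeq]
      apply MeasureTheory.integrable_finset_sum
      intro k hk
      exact (hIk k (Nat.lt_succ_iff.mp (Finset.mem_range.mp hk))).const_mul _
    have hgzero : ∫ v in Set.Ioi (0:ℝ), ψ v * ∑ k ∈ Finset.range (m+1),
        cc lam k * u ^ (lam - (k:ℝ)) * v ^ (2*k) = 0 := by
      rw [hgeq, MeasureTheory.integral_finset_sum _ (fun k hk =>
        (hIk k (Nat.lt_succ_iff.mp (Finset.mem_range.mp hk))).const_mul _)]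
      apply Finset.sum_eq_zero
      intro k hk
      rw [MeasureTheory.integral_const_mul,
        hmomk k (Nat.lt_succ_iff.mp (Finset.mem_range.mp hk)), mul_zero]
    have hsplit2 : ∫ v in Set.Ioc (0:ℝ) T, ψ v * ∑ k ∈ Finset.range (m+1),
        cc lam k * u ^ (lam - (k:ℝ)) * v ^ (2*k)
        = - ∫ v in Set.Ioi T, ψ v * ∑ k ∈ Finset.range (m+1),
            cc lam k * u ^ (lam - (k:ℝ)) * v ^ (2*k) := by
      have hun := MeasureTheory.setIntegral_union (Set.Ioc_disjoint_Ioi le_rfl)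
        measurableSet_Ioi (hIg.mono_set hsub0) (hIg.mono_set hsubT)
        (f := fun v => ψ v * ∑ k ∈ Finset.range (m+1),
          cc lam k * u ^ (lam - (k:ℝ)) * v ^ (2*k)) (μ := volume)
      rw [Set.Ioc_union_Ioi_eq_Ioi hT0.le, hgzero] at hun
      linarith [hun]
    have hIhg : IntegrableOn (fun v => ψ v * ((u - v^2) ^ lam - ∑ k ∈ Finset.range (m+1),
        cc lam k * u ^ (lam - (k:ℝ)) * v ^ (2*k))) (Set.Ioc 0 T) := by
      have e : (fun v : ℝ => ψ v * ((u - v^2) ^ lam - ∑ k ∈ Finset.range (m+1),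
          cc lam k * u ^ (lam - (k:ℝ)) * v ^ (2*k)))
          = fun v => ψ v * (u - v^2) ^ lam - ψ v * ∑ k ∈ Finset.range (m+1),
              cc lam k * u ^ (lam - (k:ℝ)) * v ^ (2*k) := funext fun v => by ring
      rw [e]
      exact hIh.sub (hIg.mono_set hsub0)
    have hsplit1 : ∫ v in Set.Ioc (0:ℝ) T, ψ v * (u - v^2) ^ lam
        = (∫ v in Set.Ioc (0:ℝ) T, ψ v * ((u - v^2) ^ lam - ∑ k ∈ Finset.range (m+1),
            cc lam k * u ^ (lam - (k:ℝ)) * v ^ (2*k)))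
          + ∫ v in Set.Ioc (0:ℝ) T, ψ v * ∑ k ∈ Finset.range (m+1),
              cc lam k * u ^ (lam - (k:ℝ)) * v ^ (2*k) := by
      rw [← MeasureTheory.integral_add hIhg (hIg.mono_set hsub0)]
      apply MeasureTheory.integral_congr_ae
      filter_upwards with v
      ring
    -- estimate D1
    have hd1 : |∫ v in Set.Ioc (0:ℝ) T, ψ v * ((u - v^2) ^ lam - ∑ k ∈ Finset.range (m+1),
        cc lam k * u ^ (lam - (k:ℝ)) * v ^ (2*k))| ≤ C₀ * u ^ (lam - s) * Ms := by
      have habs1 : |∫ v in Set.Ioc (0:ℝ) T, ψ v * ((u - v^2) ^ lam - ∑ k ∈ Finset.range (m+1),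
          cc lam k * u ^ (lam - (k:ℝ)) * v ^ (2*k))|
          ≤ ∫ v in Set.Ioc (0:ℝ) T, |ψ v * ((u - v^2) ^ lam - ∑ k ∈ Finset.range (m+1),
              cc lam k * u ^ (lam - (k:ℝ)) * v ^ (2*k))| := by
        have := MeasureTheory.norm_integral_le_integral_norm
          (μ := volume.restrict (Set.Ioc (0:ℝ) T))
          (f := fun v => ψ v * ((u - v^2) ^ lam - ∑ k ∈ Finset.range (m+1),
            cc lam k * u ^ (lam - (k:ℝ)) * v ^ (2*k)))
        simpa only [Real.norm_eq_abs] using this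
      refine habs1.trans ?_
      have hmono : ∫ v in Set.Ioc (0:ℝ) T, |ψ v * ((u - v^2) ^ lam - ∑ k ∈ Finset.range (m+1),
          cc lam k * u ^ (lam - (k:ℝ)) * v ^ (2*k))|
          ≤ ∫ v in Set.Ioc (0:ℝ) T, C₀ * u ^ (lam - s) * (v ^ (2*s) * |ψ v|) := by
        apply setIntegral_mono_on hIhg.abs ((hIMs.mono_set hsub0).const_mul _)
          measurableSet_Ioc
        intro v hv
        have hv2 : v^2 ≤ u := by
          have h := pow_le_pow_left₀ hv.1.le hv.2 2
          rwa [hTsq] at h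
        rw [abs_mul]
        calc |ψ v| * |(u - v^2) ^ lam - ∑ k ∈ Finset.range (m+1),
              cc lam k * u ^ (lam - (k:ℝ)) * v ^ (2*k)|
            ≤ |ψ v| * (C₀ * u ^ (lam - s) * v ^ (2*s)) :=
              mul_le_mul_of_nonneg_left (hC₀b u hu0 v hv.1.le hv2) (abs_nonneg _)
          _ = C₀ * u ^ (lam - s) * (v ^ (2*s) * |ψ v|) := by ring
      refine hmono.trans ?_
      rw [MeasureTheory.integral_const_mul]
      apply mul_le_mul_of_nonneg_left _ (by positivity)
      apply MeasureTheory.setIntegral_mono_set hIMs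
      · filter_upwards [MeasureTheory.ae_restrict_mem measurableSet_Ioi] with v hv
        exact mul_nonneg (Real.rpow_nonneg (le_of_lt hv) _) (abs_nonneg _)
      · exact hsub0.eventuallyLE
    -- estimate D2
    have hd2 : |∫ v in Set.Ioi T, ψ v * ∑ k ∈ Finset.range (m+1),
        cc lam k * u ^ (lam - (k:ℝ)) * v ^ (2*k)| ≤ D * Mβ * u ^ (lam - β/2) := by
      rw [hgeq, MeasureTheory.integral_finset_sum _ (fun k hk =>
        ((hIk k (Nat.lt_succ_iff.mp (Finset.mem_range.mp hk))).mono_set hsubT).const_mul _)]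
      refine (Finset.abs_sum_le_sum_abs _ _).trans ?_
      rw [show D * Mβ * u ^ (lam - β/2)
          = ∑ k ∈ Finset.range (m+1), |cc lam k| * (Mβ * u ^ (lam - β/2)) by
        rw [← Finset.sum_mul]; ring]
      apply Finset.sum_le_sum
      intro k hk
      have hkm : k ≤ m := Nat.lt_succ_iff.mp (Finset.mem_range.mp hk)
      rw [MeasureTheory.integral_const_mul, abs_mul, abs_mul,
        abs_of_nonneg (Real.rpow_nonneg hu0.le _), mul_assoc]
      apply mul_le_mul_of_nonneg_left _ (abs_nonneg _)
      -- u^(lam-k) * |∫_{Ioi T} v^{2k} ψ| ≤ Mβ * u^(lam-β/2)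
      have key1 : |∫ v in Set.Ioi T, v ^ (2*k : ℕ) * ψ v|
          ≤ T ^ (((2*k : ℕ):ℝ) - β) * Mβ := by
        have habs2 : |∫ v in Set.Ioi T, v ^ (2*k : ℕ) * ψ v|
            ≤ ∫ v in Set.Ioi T, |v ^ (2*k : ℕ) * ψ v| := by
          have := MeasureTheory.norm_integral_le_integral_norm
            (μ := volume.restrict (Set.Ioi T)) (f := fun v => v ^ (2*k : ℕ) * ψ v)
          simpa only [Real.norm_eq_abs] using this
        refine habs2.trans ?_
        have hmono2 : ∫ v in Set.Ioi T, |v ^ (2*k : ℕ) * ψ v|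
            ≤ ∫ v in Set.Ioi T, T ^ (((2*k : ℕ):ℝ) - β) * (v ^ β * |ψ v|) := by
          apply setIntegral_mono_on ((hIk k hkm).mono_set hsubT).abs
            ((hIMβ.mono_set hsubT).const_mul _) measurableSet_Ioi
          intro v hv
          simp only [Set.mem_Ioi] at hv
          have hv0 : (0:ℝ) < v := lt_trans hT0 hv
          rw [abs_mul, abs_pow, abs_of_pos hv0]
          have e1 : v ^ (2*k : ℕ) = v ^ (((2*k : ℕ):ℝ) - β) * v ^ β := by
            rw [← Real.rpow_natCast v (2*k), ← Real.rpow_add hv0]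
            congr 1
            ring
          rw [e1]
          have e2 : v ^ (((2*k : ℕ):ℝ) - β) ≤ T ^ (((2*k : ℕ):ℝ) - β) :=
            Real.rpow_le_rpow_of_nonpos hT0 hv.le (by linarith [h2kβ k hkm])
          calc v ^ (((2*k : ℕ):ℝ) - β) * v ^ β * |ψ v|
              ≤ T ^ (((2*k : ℕ):ℝ) - β) * v ^ β * |ψ v| := by
                apply mul_le_mul_of_nonneg_right
                  (mul_le_mul_of_nonneg_right e2 (Real.rpow_nonneg hv0.le β)) (abs_nonneg _)
            _ = T ^ (((2*k : ℕ):ℝ) - β) * (v ^ β * |ψ v|) := by ring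
        refine hmono2.trans ?_
        rw [MeasureTheory.integral_const_mul]
        apply mul_le_mul_of_nonneg_left _ (Real.rpow_nonneg hT0.le _)
        apply MeasureTheory.setIntegral_mono_set (hIMβ.mono_set (Set.Ioi_subset_Ioi one_pos.le))
        · filter_upwards [MeasureTheory.ae_restrict_mem measurableSet_Ioi] with v hv
          simp only [Set.mem_Ioi] at hv
          exact mul_nonneg (Real.rpow_nonneg (by linarith) _) (abs_nonneg _)
        · exact hsubT1.eventuallyLE
      have key2 : u ^ (lam - (k:ℝ)) * T ^ (((2*k : ℕ):ℝ) - β) = u ^ (lam - β/2) := by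
        rw [hTdef, Real.sqrt_eq_rpow, ← Real.rpow_mul hu0.le, ← Real.rpow_add hu0]
        congr 1
        push_cast
        ring
      calc u ^ (lam - (k:ℝ)) * |∫ v in Set.Ioi T, v ^ (2*k : ℕ) * ψ v|
          ≤ u ^ (lam - (k:ℝ)) * (T ^ (((2*k : ℕ):ℝ) - β) * Mβ) :=
            mul_le_mul_of_nonneg_left key1 (Real.rpow_nonneg hu0.le _)
        _ = (u ^ (lam - (k:ℝ)) * T ^ (((2*k : ℕ):ℝ) - β)) * Mβ := by ring
        _ = u ^ (lam - β/2) * Mβ := by rw [key2]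
        _ = Mβ * u ^ (lam - β/2) := mul_comm _ _
      -- combine
    rw [intervalIntegral.integral_of_le hT0.le, hsplit1, hsplit2]
    have hfin : |(∫ v in Set.Ioc (0:ℝ) T, ψ v * ((u - v^2) ^ lam - ∑ k ∈ Finset.range (m+1),
        cc lam k * u ^ (lam - (k:ℝ)) * v ^ (2*k)))
        + - ∫ v in Set.Ioi T, ψ v * ∑ k ∈ Finset.range (m+1),
            cc lam k * u ^ (lam - (k:ℝ)) * v ^ (2*k)|
        ≤ C₀ * u ^ (lam - s) * Ms + D * Mβ * u ^ (lam - β/2) := by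
      refine (abs_add_le _ _).trans ?_
      rw [abs_neg]
      exact add_le_add hd1 hd2
    refine hfin.trans ?_
    have hexp : u ^ (lam - β/2) ≤ u ^ (lam - s) :=
      Real.rpow_le_rpow_of_exponent_le hu1 (by linarith)
    have h1 : D * Mβ * u ^ (lam - β/2) ≤ D * Mβ * u ^ (lam - s) :=
      mul_le_mul_of_nonneg_left hexp (mul_nonneg hD0 hMβ)
    linarith [h1]
  -- conclusion
  refine ⟨s - lam, (2 / Real.Gamma (lam+1)) * 2 ^ s * (M0 + (C₀ * Ms + D * Mβ)) + 1, by linarith, ?_, ?_⟩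
  · have : 0 ≤ (2 / Real.Gamma (lam+1)) * 2 ^ s * (M0 + (C₀ * Ms + D * Mβ)) := by
      apply mul_nonneg (mul_nonneg hΓ2 (Real.rpow_nonneg (by norm_num) s))
      nlinarith [mul_nonneg hC₀.le hMs, mul_nonneg hD0 hMβ]
    linarith
  intro u hu
  have hfr : fracB (lam + 1) ψ u
      = (2 / Real.Gamma (lam + 1)) * ∫ v in (0:ℝ)..(Real.sqrt u), ψ v * (u - v^2) ^ lam := by
    rw [fracB, add_sub_cancel_right]
  rw [hfr, show lam + (s - lam) = s by ring, abs_mul, abs_of_nonneg hΓ2]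
  have hup : (0:ℝ) < (u + 1) ^ s := Real.rpow_pos_of_pos (by linarith) s
  rw [le_div_iff₀ hup]
  have hK1 : (0:ℝ) ≤ C₀ * Ms + D * Mβ :=
    add_nonneg (mul_nonneg hC₀.le hMs) (mul_nonneg hD0 hMβ)
  have h2s : (0:ℝ) ≤ (2:ℝ) ^ s := Real.rpow_nonneg (by norm_num) s
  rcases le_or_gt u 1 with hc | hc
  · have h1 := hsmall u hu
    have h2 : (u+1) ^ s ≤ 2 ^ s := Real.rpow_le_rpow (by linarith) (by linarith) hs0.le
    calc 2 / Real.Gamma (lam+1) * |∫ v in (0:ℝ)..(Real.sqrt u), ψ v * (u - v^2) ^ lam|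
          * (u+1) ^ s
        ≤ 2 / Real.Gamma (lam+1) * (M0 * u ^ lam) * 2 ^ s := by
          apply mul_le_mul (mul_le_mul_of_nonneg_left h1 hΓ2) h2
            (Real.rpow_nonneg (by linarith) s)
            (mul_nonneg hΓ2 (mul_nonneg hM0 (Real.rpow_nonneg hu.le lam)))
      _ = (2 / Real.Gamma (lam+1) * 2 ^ s * M0) * u ^ lam := by ring
      _ ≤ (2 / Real.Gamma (lam+1) * 2 ^ s * (M0 + (C₀ * Ms + D * Mβ)) + 1) * u ^ lam := by
          apply mul_le_mul_of_nonneg_right _ (Real.rpow_nonneg hu.le lam)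
          nlinarith [mul_nonneg (mul_nonneg hΓ2 h2s) hK1]
  · have h1 := hlarge u hc.le
    have h2u : (u+1) ^ s ≤ 2 ^ s * u ^ s := by
      calc (u+1) ^ s ≤ (2*u) ^ s := Real.rpow_le_rpow (by linarith) (by linarith) hs0.le
        _ = 2 ^ s * u ^ s := Real.mul_rpow (by norm_num) hu.le
    calc 2 / Real.Gamma (lam+1) * |∫ v in (0:ℝ)..(Real.sqrt u), ψ v * (u - v^2) ^ lam|
          * (u+1) ^ s
        ≤ 2 / Real.Gamma (lam+1) * ((C₀ * Ms + D * Mβ) * u ^ (lam - s)) * (2 ^ s * u ^ s) := by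
          apply mul_le_mul (mul_le_mul_of_nonneg_left h1 hΓ2) h2u
            (Real.rpow_nonneg (by linarith) s)
            (mul_nonneg hΓ2 (mul_nonneg hK1 (Real.rpow_nonneg hu.le _)))
      _ = (2 / Real.Gamma (lam+1) * 2 ^ s * (C₀ * Ms + D * Mβ)) * (u ^ (lam - s) * u ^ s) := by
          ring
      _ = (2 / Real.Gamma (lam+1) * 2 ^ s * (C₀ * Ms + D * Mβ)) * u ^ lam := by
          rw [← Real.rpow_add hu]
          norm_num
      _ ≤ (2 / Real.Gamma (lam+1) * 2 ^ s * (M0 + (C₀ * Ms + D * Mβ)) + 1) * u ^ lam := by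
          apply mul_le_mul_of_nonneg_right _ (Real.rpow_nonneg hu.le lam)
          nlinarith [mul_nonneg (mul_nonneg hΓ2 h2s) hM0]
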